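/- Let N ∈ 𝒩 be a face of the complex of k-trees, viewed as a subset of G ⊆ Π^(k)_m such that every antichain in N of size ≥ 2 has a unique minimal upper bound in Π^(k)_m not lying in G. Define Σ(N) as the set of all (unique) joins in Π^(k)_m of subsets of N, ordered by the induced order. Then for every a ∈ Σ(N), a equals the join (in Π_m) of the maximal elements of N below a. -/

import Mathlib

open Classical Set
noncomputable section

/-- The partition of `Fin m` whose only (possibly) non-singleton block is `B`. -/
def blockSetoid {m : ℕ} (B : Set (Fin m)) : Setoid (Fin m) :=
  ⟨fun x y => x = y ∨ (x ∈ B ∧ y ∈ B), by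
    refine ⟨fun x => Or.inl rfl, ?_, ?_⟩
    · rintro x y (h | h)
      · exact Or.inl h.symm
      · exact Or.inr ⟨h.2, h.1⟩
    · rintro x y z (h1 | h1) (h2 | h2)
      · exact Or.inl (h1.trans h2)
      · subst h1; exact Or.inr h2
      · subst h2; exact Or.inr h1
      · exact Or.inr ⟨h1.1, h2.2⟩⟩

/-- `Π^(k)_m`: partitions of `{1,…,m}` all of whose blocks have size ≡ 1 (mod k). -/
def Pik (k m : ℕ) : Set (Setoid (Fin m)) :=
  {s | ∀ c ∈ s.classes, c.ncard ≡ 1 [MOD k]}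

/-- `I`: partitions with exactly one non-singleton block (the minimal building set of `Π_m`). -/
def BSI (m : ℕ) : Set (Setoid (Fin m)) :=
  {s | ∃ B : Set (Fin m), 2 ≤ B.ncard ∧ s = blockSetoid B}

/-- `G`: partitions with exactly one non-singleton block, of size ≡ 1 (mod k). -/
def BSG (k m : ℕ) : Set (Setoid (Fin m)) :=
  {s | ∃ B : Set (Fin m), 2 ≤ B.ncard ∧ B.ncard ≡ 1 [MOD k] ∧ s = blockSetoid B}

/-- `z` is a minimal upper bound of the set `A` within the subposet `P`. -/
def IsMinUB {L : Type*} [PartialOrder L] (P : Set L) (A : Set L) (z : L) : Prop :=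
  z ∈ P ∧ (∀ a ∈ A, a ≤ z) ∧ ∀ w ∈ P, (∀ a ∈ A, a ≤ w) → w ≤ z → w = z

/-- Maximal elements of `S` lying below `x`. -/
def maxBelow {L : Type*} [PartialOrder L] (S : Set L) (x : L) : Set L :=
  {g ∈ S | g ≤ x ∧ ∀ g' ∈ S, g' ≤ x → g ≤ g' → g = g'}

/-- The support of a partition: union of its non-singleton blocks. -/
def suppPart {m : ℕ} (s : Setoid (Fin m)) : Set (Fin m) :=
  {x | ∃ y, x ≠ y ∧ s x y}

/-- Membership in the family of faces of the complex of k-trees: `N ⊆ G` and every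
antichain in `N` of size at least two has a unique minimal upper bound in `Pik k m`,
which moreover does not lie in `G`. -/
def memN (k m : ℕ) (N : Set (Setoid (Fin m))) : Prop :=
  N ⊆ BSG k m ∧ ∀ S : Finset (Setoid (Fin m)), ↑S ⊆ N → 2 ≤ S.card →
    (∀ a ∈ S, ∀ b ∈ S, a ≠ b → ¬ a ≤ b) →
    (∃! z, IsMinUB (Pik k m) ↑S z) ∧
      ∀ z, IsMinUB (Pik k m) ↑S z → z ∉ BSG k m

/-- `Σ(N)`: the set of all (unique minimal-upper-bound) joins of subsets of `N` inside
`Pik k m`; the empty join yields the minimal element. -/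
def SigmaSet (k m : ℕ) (N : Set (Setoid (Fin m))) : Set (Setoid (Fin m)) :=
  {a | ∃ X ⊆ N, IsMinUB (Pik k m) X a}

section helpers

instance {m : ℕ} : Finite (Setoid (Fin m)) :=
  Finite.of_injective (fun s => s.r)
    (fun s t h => Setoid.ext (fun a b => by rw [show s.r = t.r from h]))

variable {k m : ℕ}

lemma blockSetoid_le {B : Set (Fin m)} {s : Setoid (Fin m)}
    (h : ∀ x ∈ B, ∀ y ∈ B, s x y) : blockSetoid B ≤ s := by
  rintro x y (rfl | ⟨hx, hy⟩)
  · exact s.refl x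
  · exact h x hx y hy

lemma blockSetoid_mono {B B' : Set (Fin m)} (h : B ⊆ B') :
    blockSetoid B ≤ blockSetoid B' :=
  blockSetoid_le (fun x hx y hy => Or.inr ⟨h hx, h hy⟩)

lemma supp_blockSetoid {B : Set (Fin m)} (hB : 2 ≤ B.ncard) :
    suppPart (blockSetoid B) = B := by
  ext x
  constructor
  · rintro ⟨y, hne, (rfl | ⟨hx, hy⟩)⟩
    · exact absurd rfl hne
    · exact hx
  · intro hx
    obtain ⟨y, hy, hyx⟩ := Set.exists_ne_of_one_lt_ncard (s := B) (by omega) x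
    exact ⟨y, Ne.symm hyx, Or.inr ⟨hx, hy⟩⟩

lemma blockSetoid_mem_Pik {B : Set (Fin m)} (hB : B.ncard ≡ 1 [MOD k]) :
    blockSetoid B ∈ Pik k m := by
  rintro c ⟨y, rfl⟩
  by_cases hy : y ∈ B
  · have hc : {x | blockSetoid B x y} = B := by
      ext x
      constructor
      · rintro (rfl | ⟨hx, _⟩)
        · exact hy
        · exact hx
      · intro hx; exact Or.inr ⟨hx, hy⟩
    rw [hc]; exact hB
  · have hc : {x | blockSetoid B x y} = {y} := by
      ext x
      constructor
      · rintro (rfl | ⟨_, h⟩)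
        · rfl
        · exact absurd h hy
      · rintro rfl; exact Or.inl rfl
    rw [hc, Set.ncard_singleton]

lemma bsg_block {g : Setoid (Fin m)} (hg : g ∈ BSG k m) :
    2 ≤ (suppPart g).ncard ∧ (suppPart g).ncard ≡ 1 [MOD k] ∧ g = blockSetoid (suppPart g) := by
  obtain ⟨B, hB2, hBk, rfl⟩ := hg
  rw [supp_blockSetoid hB2]
  exact ⟨hB2, hBk, rfl⟩

lemma supp_disjoint {N : Set (Setoid (Fin m))} (hN : memN k m N)
    {g g' : Setoid (Fin m)} (hg : g ∈ N) (hg' : g' ∈ N)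
    (h1 : ¬ g ≤ g') (h2 : ¬ g' ≤ g) {p : Fin m}
    (hp : p ∈ suppPart g) (hp' : p ∈ suppPart g') : False := by
  obtain ⟨hgB2, hgBk, hgB⟩ := bsg_block (hN.1 hg)
  obtain ⟨hg'B2, hg'Bk, hg'B⟩ := bsg_block (hN.1 hg')
  have hne : g ≠ g' := fun h => h1 (le_of_eq h)
  have hS : (↑({g, g'} : Finset (Setoid (Fin m))) : Set (Setoid (Fin m))) ⊆ N := by
    intro x hx
    simp only [Finset.coe_insert, Finset.coe_singleton, Set.mem_insert_iff,
      Set.mem_singleton_iff] at hx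
    rcases hx with rfl | rfl
    · exact hg
    · exact hg'
  have hcard : 2 ≤ ({g, g'} : Finset (Setoid (Fin m))).card := by
    rw [Finset.card_pair hne]
  have hanti : ∀ x ∈ ({g, g'} : Finset (Setoid (Fin m))),
      ∀ y ∈ ({g, g'} : Finset (Setoid (Fin m))), x ≠ y → ¬ x ≤ y := by
    intro x hx y hy hxy
    simp only [Finset.mem_insert, Finset.mem_singleton] at hx hy
    rcases hx with rfl | rfl <;> rcases hy with rfl | rfl
    · exact absurd rfl hxy
    · exact h1
    · exact h2
    · exact absurd rfl hxy
  obtain ⟨⟨z, hz, _⟩, hnotG⟩ := hN.2 {g, g'} hS hcard hanti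
  have hgz : g ≤ z := hz.2.1 g (by simp)
  have hg'z : g' ≤ z := hz.2.1 g' (by simp)
  have hBC : suppPart g ⊆ {x | z x p} := by
    intro x hx
    have hxp : g x p := by rw [hgB]; exact Or.inr ⟨hx, hp⟩
    exact hgz hxp
  have hB'C : suppPart g' ⊆ {x | z x p} := by
    intro x hx
    have hxp : g' x p := by rw [hg'B]; exact Or.inr ⟨hx, hp'⟩
    exact hg'z hxp
  have hUC : suppPart g ∪ suppPart g' ⊆ {x | z x p} := Set.union_subset hBC hB'C
  have hCk : {x | z x p}.ncard ≡ 1 [MOD k] := hz.1 {x | z x p} ⟨p, rfl⟩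
  set u := (suppPart g ∪ suppPart g').ncard with hu
  have huC : u ≤ {x | z x p}.ncard := Set.ncard_le_ncard hUC (Set.toFinite _)
  set P : Set ℕ := {c | u ≤ c ∧ c ≡ 1 [MOD k]} with hP
  have hPne : {x | z x p}.ncard ∈ P := ⟨huC, hCk⟩
  have hc0 : sInf P ∈ P := Nat.sInf_mem ⟨_, hPne⟩
  have hc0C : sInf P ≤ {x | z x p}.ncard := Nat.sInf_le hPne
  obtain ⟨C', hUC', hC'C, hC'card⟩ := Set.exists_subsuperset_card_eq hUC hc0.1 hc0C
  have hC'k : C'.ncard ≡ 1 [MOD k] := by rw [hC'card]; exact hc0.2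
  have hu2 : 2 ≤ u := le_trans hgB2 (Set.ncard_le_ncard Set.subset_union_left (Set.toFinite _))
  have hC'2 : 2 ≤ C'.ncard := by rw [hC'card]; exact le_trans hu2 hc0.1
  have hBw : suppPart g ⊆ C' := Set.subset_union_left.trans hUC'
  have hB'w : suppPart g' ⊆ C' := Set.subset_union_right.trans hUC'
  have hgw : g ≤ blockSetoid C' := by rw [hgB]; exact blockSetoid_mono hBw
  have hg'w : g' ≤ blockSetoid C' := by rw [hg'B]; exact blockSetoid_mono hB'w
  have hmin : IsMinUB (Pik k m) (↑({g, g'} : Finset (Setoid (Fin m)))) (blockSetoid C') := by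
    refine ⟨blockSetoid_mem_Pik hC'k, ?_, ?_⟩
    · intro x hx
      simp only [Finset.coe_insert, Finset.coe_singleton, Set.mem_insert_iff,
        Set.mem_singleton_iff] at hx
      rcases hx with rfl | rfl
      · exact hgw
      · exact hg'w
    · intro v hv hvub hvw
      have hgv : g ≤ v := hvub g (by simp)
      have hg'v : g' ≤ v := hvub g' (by simp)
      have hBD : suppPart g ⊆ {x | v x p} := by
        intro x hx
        have hxp : g x p := by rw [hgB]; exact Or.inr ⟨hx, hp⟩
        exact hgv hxp
      have hB'D : suppPart g' ⊆ {x | v x p} := by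
        intro x hx
        have hxp : g' x p := by rw [hg'B]; exact Or.inr ⟨hx, hp'⟩
        exact hg'v hxp
      have hUD : suppPart g ∪ suppPart g' ⊆ {x | v x p} := Set.union_subset hBD hB'D
      have hDk : {x | v x p}.ncard ≡ 1 [MOD k] := hv {x | v x p} ⟨p, rfl⟩
      have hDC' : {x | v x p} ⊆ C' := by
        intro x hx
        rcases hvw hx with h | h
        · rw [h]; exact hBw hp
        · exact h.1
      have hDP : {x | v x p}.ncard ∈ P :=
        ⟨Set.ncard_le_ncard hUD (Set.toFinite _), hDk⟩
      have hc0D : sInf P ≤ {x | v x p}.ncard := Nat.sInf_le hDP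
      have hDeq : {x | v x p} = C' :=
        Set.eq_of_subset_of_ncard_le hDC' (by rw [hC'card]; exact hc0D) (Set.toFinite _)
      refine le_antisymm hvw (blockSetoid_le ?_)
      intro x hx y hy
      rw [← hDeq] at hx hy
      exact v.trans hx (v.symm hy)
  exact hnotG (blockSetoid C') hmin ⟨C', hC'2, hC'k, rfl⟩

end helpers

/-- For `N` a face of the complex of k-trees and `a ∈ Σ(N)`, the element
`a` is the join, in the full partition lattice, of the maximal elements of `N` below `a`. -/
theorem stmt7 (k m : ℕ) (hk : 1 ≤ k) (N : Set (Setoid (Fin m))) (hN : memN k m N)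
    (a : Setoid (Fin m)) (ha : a ∈ SigmaSet k m N) :
    a = sSup (maxBelow N a) := by
  obtain ⟨X, hXN, hX⟩ := ha
  set M := maxBelow N a with hM
  have hMN : ∀ g ∈ M, g ∈ N := fun g hg => hg.1
  have hMa : ∀ g ∈ M, g ≤ a := fun g hg => hg.2.1
  have hanti : ∀ g ∈ M, ∀ g' ∈ M, g ≠ g' → ¬ g ≤ g' :=
    fun g hg g' hg' hne hle => hne (hg.2.2 g' hg'.1 hg'.2.1 hle)
  have hdisj : ∀ g ∈ M, ∀ g' ∈ M, ∀ p, p ∈ suppPart g → p ∈ suppPart g' → g = g' := by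
    intro g hg g' hg' p hp hp'
    by_contra hne
    exact supp_disjoint hN (hMN g hg) (hMN g' hg')
      (hanti g hg g' hg' hne) (hanti g' hg' g hg (Ne.symm hne)) hp hp'
  have hsupp : ∀ g ∈ M, ∀ x y : Fin m, g x y → x ≠ y →
      x ∈ suppPart g ∧ y ∈ suppPart g := by
    intro g hg x y hxy hne
    exact ⟨⟨y, hne, hxy⟩, ⟨x, Ne.symm hne, g.symm hxy⟩⟩
  have requiv : Equivalence (fun x y : Fin m => x = y ∨ ∃ g ∈ M, g x y ∧ x ≠ y) := by
    refine ⟨fun x => Or.inl rfl, ?_, ?_⟩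
    · rintro x y (rfl | ⟨g, hg, hxy, hne⟩)
      · exact Or.inl rfl
      · exact Or.inr ⟨g, hg, g.symm hxy, Ne.symm hne⟩
    · rintro x y z (rfl | ⟨g, hg, hxy, hnexy⟩) h2
      · exact h2
      · rcases h2 with rfl | ⟨g', hg', hyz, hneyz⟩
        · exact Or.inr ⟨g, hg, hxy, hnexy⟩
        · have hgg' : g = g' := hdisj g hg g' hg' y
            ((hsupp g hg x y hxy hnexy).2) ((hsupp g' hg' y z hyz hneyz).1)
          subst hgg'
          by_cases hxz : x = z
          · exact Or.inl hxz
          · exact Or.inr ⟨g, hg, g.trans hxy hyz, hxz⟩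
  set s : Setoid (Fin m) := ⟨fun x y => x = y ∨ ∃ g ∈ M, g x y ∧ x ≠ y, requiv⟩ with hs
  have hrel : ∀ x y : Fin m, s x y ↔ (x = y ∨ ∃ g ∈ M, g x y ∧ x ≠ y) := fun x y => Iff.rfl
  have hga : ∀ g ∈ M, g ≤ s := by
    intro g hg x y hxy
    by_cases hxy' : x = y
    · exact Or.inl hxy'
    · exact Or.inr ⟨g, hg, hxy, hxy'⟩
  have hsa : s ≤ a := by
    intro x y hxy
    rcases (hrel x y).mp hxy with rfl | ⟨g, hg, hgxy, _⟩
    · exact a.refl x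
    · exact hMa g hg hgxy
  have hXub : ∀ x ∈ X, x ≤ s := by
    intro x hx
    have hxa : x ≤ a := hX.2.1 x hx
    obtain ⟨g, hgT, hgmax⟩ := Set.Finite.exists_maximalFor id {g | (g ∈ N ∧ g ≤ a) ∧ x ≤ g}
      (Set.toFinite _) ⟨x, ⟨hXN hx, hxa⟩, le_refl x⟩
    have hgM : g ∈ M := by
      refine ⟨hgT.1.1, hgT.1.2, ?_⟩
      intro g' hg' hg'a hgg'
      exact le_antisymm hgg' (hgmax ⟨⟨hg', hg'a⟩, hgT.2.trans hgg'⟩ hgg')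
    exact le_trans hgT.2 (hga g hgM)
  have hsPik : s ∈ Pik k m := by
    rintro c ⟨y, rfl⟩
    by_cases hy : ∃ g ∈ M, y ∈ suppPart g
    · obtain ⟨g, hg, hyg⟩ := hy
      obtain ⟨hB2, hBk, hgB⟩ := bsg_block (hN.1 (hMN g hg))
      have hc : {x | s x y} = suppPart g := by
        ext x
        constructor
        · intro hx
          rcases (hrel x y).mp hx with rfl | ⟨g', hg', hxy, hne⟩
          · exact hyg
          · have hy' : y ∈ suppPart g' := (hsupp g' hg' x y hxy hne).2
            have hgg : g' = g := hdisj g' hg' g hg y hy' hyg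
            subst hgg
            exact (hsupp g' hg' x y hxy hne).1
        · intro hx
          refine (hrel x y).mpr ?_
          by_cases hxy : x = y
          · exact Or.inl hxy
          · refine Or.inr ⟨g, hg, ?_, hxy⟩
            have : blockSetoid (suppPart g) x y := Or.inr ⟨hx, hyg⟩
            rw [hgB]
            exact this
      rw [hc]; exact hBk
    · have hc : {x | s x y} = {y} := by
        ext x
        constructor
        · intro hx
          rcases (hrel x y).mp hx with rfl | ⟨g, hg, hxy, hne⟩
          · rfl
          · exact absurd ⟨g, hg, (hsupp g hg x y hxy hne).2⟩ hy
        · intro hx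
          have hxy : x = y := hx
          subst hxy
          exact (hrel _ _).mpr (Or.inl rfl)
      rw [hc, Set.ncard_singleton]
  have hsX : s = a := hX.2.2 s hsPik hXub hsa
  have h1 : sSup M ≤ s := sSup_le (fun g hg => hga g hg)
  have h2 : s ≤ sSup M := by
    intro x y hxy
    rcases (hrel x y).mp hxy with rfl | ⟨g, hg, hgxy, _⟩
    · exact (sSup M).refl x
    · exact le_sSup hg hgxy
  rw [← hsX]
  exact le_antisymm h2 h1
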